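/- arXiv:2309.14628 — 5 statements merged into one kernel-verified Lean document; each statement's English description precedes it below -/
import Mathlib

section
/- Let a_d = (5d)!/(d!)⁵ and b_d = a_d·(∑_{m=1}^{5d} 5/m − 5∑_{m=1}^{d} 1/m). Then both power series ∑_{d≥0} a_d q^d and ∑_{d≥1} b_d q^d converge for real q with 0 < q < 5⁻⁵, and the function I₁(q) := (∑_{d≥0} a_d q^d)·log q + ∑_{d≥1} b_d q^d satisfies the quintic Picard–Fuchs equation θ⁴I₁ = 5q(5θ+1)(5θ+2)(5θ+3)(5θ+4)I₁ on the interval (0, 5⁻⁵), where θ = q·d/dq. -/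
/-- The coefficients `a_d = (5d)!/(d!)⁵`. -/
noncomputable def a (d : ℕ) : ℝ :=
  (Nat.factorial (5 * d) : ℝ) / (Nat.factorial d : ℝ) ^ 5

/-- The coefficients `b_d = a_d · (∑_{m=1}^{5d} 5/m − 5∑_{m=1}^{d} 1/m)`.  Note `b 0 = 0`. -/
noncomputable def b (d : ℕ) : ℝ :=
  a d * ((∑ m ∈ Finset.Icc 1 (5 * d), 5 / (m : ℝ)) - 5 * ∑ m ∈ Finset.Icc 1 d, 1 / (m : ℝ))

/-- The logarithmic derivative operator `θ = q·d/dq` on functions. -/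
noncomputable def theta (f : ℝ → ℝ) : ℝ → ℝ := fun q => q * deriv f q

/-- The operator `5θ + c`. -/
noncomputable def A (c : ℝ) (f : ℝ → ℝ) : ℝ → ℝ := fun q => 5 * theta f q + c * f q

/-- `I₁(q) = (∑_{d≥0} a_d qᵈ)·log q + ∑_{d≥1} b_d qᵈ` (the sum over `d ≥ 1` agrees with the
sum over all `d : ℕ` since `b 0 = 0`). -/
noncomputable def I1 : ℝ → ℝ := fun q =>
  (∑' d : ℕ, a d * q ^ d) * Real.log q + ∑' d : ℕ, b d * q ^ d

/-! ### Auxiliary machinery -/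

noncomputable def FF (c : ℕ → ℝ) (q : ℝ) : ℝ := ∑' d : ℕ, c d * q ^ d

def Tc (c : ℕ → ℝ) : ℕ → ℝ := fun d => (d : ℝ) * c d

def Maj (c : ℕ → ℝ) : Prop :=
  ∃ C : ℝ, ∃ k : ℕ, ∀ d : ℕ, |c d| ≤ C * (d + 1) ^ k * 3125 ^ d

lemma Maj.C_nonneg {c : ℕ → ℝ} {C : ℝ} {k : ℕ}
    (h : ∀ d : ℕ, |c d| ≤ C * (d + 1) ^ k * 3125 ^ d) : 0 ≤ C := by
  have := h 0
  simp at this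
  exact le_trans (abs_nonneg _) this

lemma maj_mono {c : ℕ → ℝ} {C : ℝ} {k k' : ℕ} (hC : 0 ≤ C) (hk : k ≤ k')
    (h : ∀ d : ℕ, |c d| ≤ C * (d + 1) ^ k * 3125 ^ d) :
    ∀ d : ℕ, |c d| ≤ C * (d + 1) ^ k' * 3125 ^ d := by
  intro d
  refine (h d).trans ?_
  have h1 : ((d : ℝ) + 1) ^ k ≤ ((d : ℝ) + 1) ^ k' := by
    exact pow_le_pow_right₀ (by have : (0:ℝ) ≤ d := Nat.cast_nonneg d; linarith) hk
  have : (0:ℝ) ≤ (3125:ℝ) ^ d := by positivity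
  nlinarith [mul_le_mul_of_nonneg_left h1 hC]

lemma Maj.add {c e : ℕ → ℝ} (hc : Maj c) (he : Maj e) : Maj (fun d => c d + e d) := by
  obtain ⟨C1, k1, h1⟩ := hc
  obtain ⟨C2, k2, h2⟩ := he
  have hC1 := Maj.C_nonneg h1
  have hC2 := Maj.C_nonneg h2
  refine ⟨C1 + C2, max k1 k2, fun d => ?_⟩
  have g1 := maj_mono hC1 (le_max_left k1 k2) h1 d
  have g2 := maj_mono hC2 (le_max_right k1 k2) h2 d
  calc |c d + e d| ≤ |c d| + |e d| := abs_add_le _ _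
    _ ≤ C1 * (d + 1) ^ (max k1 k2) * 3125 ^ d + C2 * (d + 1) ^ (max k1 k2) * 3125 ^ d :=
        add_le_add g1 g2
    _ = (C1 + C2) * (d + 1) ^ (max k1 k2) * 3125 ^ d := by ring

lemma Maj.smul {c : ℕ → ℝ} (r : ℝ) (hc : Maj c) : Maj (fun d => r * c d) := by
  obtain ⟨C, k, h⟩ := hc
  refine ⟨|r| * C, k, fun d => ?_⟩
  rw [abs_mul]
  calc |r| * |c d| ≤ |r| * (C * (d + 1) ^ k * 3125 ^ d) :=
        mul_le_mul_of_nonneg_left (h d) (abs_nonneg r)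
    _ = |r| * C * (d + 1) ^ k * 3125 ^ d := by ring

lemma Maj.T {c : ℕ → ℝ} (hc : Maj c) : Maj (Tc c) := by
  obtain ⟨C, k, h⟩ := hc
  have hC := Maj.C_nonneg h
  refine ⟨C, k + 1, fun d => ?_⟩
  have : |Tc c d| = (d : ℝ) * |c d| := by
    rw [Tc, abs_mul, Nat.abs_cast]
  rw [this, pow_succ]
  have hd : (d : ℝ) ≤ (d : ℝ) + 1 := by linarith
  have h3 : (0:ℝ) ≤ ((d:ℝ)+1)^k * 3125 ^ d := by positivity
  calc (d : ℝ) * |c d| ≤ ((d : ℝ) + 1) * (C * (d + 1) ^ k * 3125 ^ d) := by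
        apply mul_le_mul hd (h d) (abs_nonneg _) (by positivity)
    _ = C * ((d + 1) ^ k * (d + 1)) * 3125 ^ d := by ring

open Nat (factorial) in
lemma nat_fact_le (d : ℕ) : Nat.factorial (5 * d) ≤ 3125 ^ d * (Nat.factorial d) ^ 5 := by
  induction d with
  | zero => simp
  | succ n ih =>
    have h5 : 5 * (n + 1) = 5 * n + 1 + 1 + 1 + 1 + 1 := by ring
    rw [h5, Nat.factorial_succ, Nat.factorial_succ, Nat.factorial_succ, Nat.factorial_succ,
      Nat.factorial_succ, Nat.factorial_succ]
    calc (5*n+1+1+1+1+1) * ((5*n+1+1+1+1) * ((5*n+1+1+1) * ((5*n+1+1) * ((5*n+1) *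
          factorial (5*n)))))
        ≤ (5*(n+1)) * ((5*(n+1)) * ((5*(n+1)) * ((5*(n+1)) * ((5*(n+1)) *
          (3125 ^ n * (factorial n) ^ 5))))) := by
          gcongr <;> omega
      _ = 3125 ^ (n+1) * ((n+1) * factorial n) ^ 5 := by ring

lemma a_pos (d : ℕ) : 0 < a d := by
  unfold a
  positivity

lemma a_le (d : ℕ) : a d ≤ 3125 ^ d := by
  unfold a
  rw [div_le_iff₀ (by positivity)]
  calc ((Nat.factorial (5*d)) : ℝ) ≤ ((3125 ^ d * (Nat.factorial d)^5 : ℕ) : ℝ) := by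
        exact_mod_cast nat_fact_le d
    _ = (3125:ℝ) ^ d * ((Nat.factorial d : ℝ))^5 := by push_cast; ring

lemma maj_a : Maj a := by
  refine ⟨1, 0, fun d => ?_⟩
  rw [abs_of_pos (a_pos d)]
  simpa using a_le d

lemma b_harm_nonneg (d : ℕ) :
    0 ≤ (∑ m ∈ Finset.Icc 1 (5 * d), 5 / (m : ℝ)) - 5 * ∑ m ∈ Finset.Icc 1 d, 1 / (m : ℝ) := by
  have : (5:ℝ) * ∑ m ∈ Finset.Icc 1 d, 1 / (m : ℝ) = ∑ m ∈ Finset.Icc 1 d, 5 / (m : ℝ) := by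
    rw [Finset.mul_sum]; congr 1; ext m; ring
  rw [this, sub_nonneg]
  apply Finset.sum_le_sum_of_subset_of_nonneg
  · apply Finset.Icc_subset_Icc_right; omega
  · intro m _ _; positivity

lemma harm_le (d : ℕ) : (∑ m ∈ Finset.Icc 1 (5 * d), 5 / (m : ℝ)) ≤ 25 * d := by
  calc (∑ m ∈ Finset.Icc 1 (5 * d), 5 / (m : ℝ)) ≤ ∑ m ∈ Finset.Icc 1 (5 * d), 5 := by
        apply Finset.sum_le_sum
        intro m hm
        have : 1 ≤ m := (Finset.mem_Icc.mp hm).1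
        have h1 : (1:ℝ) ≤ (m:ℝ) := by exact_mod_cast this
        rw [div_le_iff₀ (by linarith)]
        nlinarith
    _ = (5 * d) * 5 := by
        rw [Finset.sum_const, Nat.card_Icc]
        simp [mul_comm]
    _ = 25 * d := by ring

lemma maj_b : Maj b := by
  refine ⟨25, 1, fun d => ?_⟩
  have hnn := b_harm_nonneg d
  have habs : |b d| = a d * ((∑ m ∈ Finset.Icc 1 (5 * d), 5 / (m : ℝ))
      - 5 * ∑ m ∈ Finset.Icc 1 d, 1 / (m : ℝ)) := by
    rw [b, abs_of_nonneg (mul_nonneg (a_pos d).le hnn)]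
  rw [habs]
  have h1 : ((∑ m ∈ Finset.Icc 1 (5 * d), 5 / (m : ℝ)) - 5 * ∑ m ∈ Finset.Icc 1 d, 1 / (m : ℝ))
      ≤ 25 * (d + 1) := by
    have h2 : (5:ℝ) * ∑ m ∈ Finset.Icc 1 d, 1 / (m : ℝ) ≥ 0 := by positivity
    linarith [harm_le d]
  calc a d * ((∑ m ∈ Finset.Icc 1 (5 * d), 5 / (m : ℝ)) - 5 * ∑ m ∈ Finset.Icc 1 d, 1 / (m : ℝ))
      ≤ 3125 ^ d * (25 * (d+1)) := by
        apply mul_le_mul (a_le d) h1 hnn (by positivity)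
    _ = 25 * (d+1)^1 * 3125 ^ d := by ring

lemma r_eq : (5:ℝ) ^ (-5:ℤ) = 1 / 3125 := by norm_num

lemma summable_geom_aux (C : ℝ) (k : ℕ) {x : ℝ} (hx0 : 0 ≤ x) (hx : x < 1) :
    Summable (fun d : ℕ => C * ((d : ℝ) + 1) ^ k * x ^ d) := by
  rcases eq_or_lt_of_le hx0 with h0 | h0
  · apply summable_of_ne_finset_zero (s := {0})
    intro d hd
    have : d ≠ 0 := by simpa using hd
    rw [← h0, zero_pow this, mul_zero]
  have h1 : Summable (fun n : ℕ => (n : ℝ) ^ k * x ^ n) :=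
    summable_pow_mul_geometric_of_norm_lt_one k
      (by rw [Real.norm_eq_abs, abs_of_pos h0]; exact hx)
  have h2 : Summable ((fun n : ℕ => (n : ℝ) ^ k * x ^ n) ∘ (fun d => d + 1)) :=
    h1.comp_injective (add_left_injective 1)
  refine ((h2.mul_left (C / x)).congr fun d => ?_)
  simp only [Function.comp]
  push_cast
  field_simp
  ring

lemma maj_summable {c : ℕ → ℝ} (hc : Maj c) {y : ℝ} (hy : |y| < 1 / 3125) :
    Summable (fun d : ℕ => c d * y ^ d) := by
  obtain ⟨C, k, h⟩ := hc
  have hx0 : (0:ℝ) ≤ 3125 * |y| := by positivity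
  have hx1 : 3125 * |y| < 1 := by linarith
  refine Summable.of_norm_bounded (summable_geom_aux C k hx0 hx1) fun d => ?_
  rw [Real.norm_eq_abs, abs_mul, abs_pow, mul_pow]
  calc |c d| * |y| ^ d ≤ (C * (d + 1) ^ k * 3125 ^ d) * |y| ^ d := by
        apply mul_le_mul_of_nonneg_right (h d) (by positivity)
    _ = C * ((d:ℝ) + 1) ^ k * (3125 ^ d * |y| ^ d) := by ring

lemma hasDerivAt_FF {c : ℕ → ℝ} (hc : Maj c) {q : ℝ} (hq0 : 0 < q) (hq : q < 1 / 3125) :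
    HasDerivAt (FF c) ((∑' d : ℕ, c d * ((d : ℝ) * q ^ (d - 1)))) q := by
  obtain ⟨C, k, hCk⟩ := hc
  have hCnn : 0 ≤ C := Maj.C_nonneg hCk
  set s : ℝ := (q + 1 / 3125) / 2 with hs
  have hs0 : 0 < s := by positivity
  have hqs : q < s := by simp only [hs]; linarith
  have hs1 : s < 1 / 3125 := by simp only [hs]; linarith
  set u : ℕ → ℝ := fun d => C * ((d : ℝ) + 1) ^ (k + 1) * (3125 * s) ^ d / s with hu_def
  have hu : Summable u := by
    apply Summable.div_const
    exact summable_geom_aux C (k + 1) (by positivity) (by linarith)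
  have hbound : ∀ (d : ℕ) (x : ℝ), x ∈ Metric.ball (0:ℝ) s →
      ‖c d * ((d : ℝ) * x ^ (d - 1))‖ ≤ u d := by
    intro d x hx
    have hxs : |x| ≤ s := by
      rw [Metric.mem_ball, Real.dist_eq, sub_zero] at hx; exact hx.le
    rw [Real.norm_eq_abs, abs_mul, abs_mul, Nat.abs_cast, abs_pow]
    cases d with
    | zero =>
      simp only [Nat.cast_zero, zero_mul, mul_zero, abs_zero]
      simp only [hu_def]
      positivity
    | succ n =>
      have h1 : |c (n + 1)| ≤ C * ((n:ℝ) + 1 + 1) ^ k * 3125 ^ (n + 1) := by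
        have := hCk (n + 1); push_cast at this ⊢; linarith
      have h2 : |x| ^ (n + 1 - 1) ≤ s ^ n := by
        rw [Nat.add_sub_cancel]
        exact pow_le_pow_left₀ (abs_nonneg x) hxs n
      have key : |c (n+1)| * (((n:ℝ)+1) * |x| ^ (n + 1 - 1))
          ≤ (C * ((n:ℝ) + 1 + 1) ^ k * 3125 ^ (n+1)) * (((n:ℝ)+1+1) * s ^ n) := by
        apply mul_le_mul h1 _ (by positivity) (by positivity)
        apply mul_le_mul (by linarith) h2 (by positivity)
          (by linarith [Nat.cast_nonneg (α := ℝ) n])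
      rw [show ((n + 1 : ℕ) : ℝ) = (n : ℝ) + 1 by push_cast; ring]
      refine key.trans (le_of_eq ?_)
      simp only [hu_def]
      push_cast
      rw [mul_pow]
      field_simp
      ring
  have hderiv : ∀ (t : Finset ℕ) (x : ℝ), x ∈ Metric.ball (0:ℝ) s →
      HasDerivAt (fun y => ∑ d ∈ t, c d * y ^ d) (∑ d ∈ t, c d * ((d : ℝ) * x ^ (d - 1))) x := by
    intro t x _
    apply HasDerivAt.fun_sum
    intro d _
    exact (hasDerivAt_pow d x).const_mul (c d)
  have hsum : ∀ x : ℝ, x ∈ Metric.ball (0:ℝ) s → Summable (fun d : ℕ => c d * x ^ d) := by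
    intro x hx
    rw [Metric.mem_ball, Real.dist_eq, sub_zero] at hx
    exact maj_summable ⟨C, k, hCk⟩ (by linarith)
  exact hasDerivAt_of_tendstoUniformlyOn (Metric.isOpen_ball)
    (tendstoUniformlyOn_tsum hu hbound)
    (Filter.Eventually.of_forall hderiv)
    (fun x hx => (hsum x hx).hasSum)
    (show q ∈ Metric.ball (0:ℝ) s by
      rw [Metric.mem_ball, Real.dist_eq, sub_zero, abs_of_pos hq0]; exact hqs)

lemma q_mul_aux (c : ℕ → ℝ) (q : ℝ) (d : ℕ) :
    q * (c d * ((d : ℝ) * q ^ (d - 1))) = Tc c d * q ^ d := by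
  cases d with
  | zero => simp [Tc]
  | succ n =>
    simp only [Tc, Nat.add_sub_cancel]
    push_cast
    ring

lemma FF_T_eq {c : ℕ → ℝ} (q : ℝ) :
    FF (Tc c) q = q * ∑' d : ℕ, c d * ((d : ℝ) * q ^ (d - 1)) := by
  rw [FF, ← tsum_mul_left]
  exact tsum_congr fun d => (q_mul_aux c q d).symm

lemma hasDerivAt_FF' {c : ℕ → ℝ} (hc : Maj c) {q : ℝ} (hq0 : 0 < q) (hq : q < 1 / 3125) :
    HasDerivAt (FF c) (FF (Tc c) q / q) q := by
  have h := hasDerivAt_FF hc hq0 hq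
  have : FF (Tc c) q / q = ∑' d : ℕ, c d * ((d : ℝ) * q ^ (d - 1)) := by
    rw [FF_T_eq, mul_div_cancel_left₀ _ (ne_of_gt hq0)]
  rwa [this]

noncomputable def GG (c e : ℕ → ℝ) : ℝ → ℝ := fun x => FF c x * Real.log x + FF e x

lemma FF_add {c e : ℕ → ℝ} (hc : Maj c) (he : Maj e) {q : ℝ} (hq0 : 0 < q) (hq : q < 1/3125) :
    FF (fun d => c d + e d) q = FF c q + FF e q := by
  have h1 : |q| < 1/3125 := by rw [abs_of_pos hq0]; exact hq
  simp only [FF, add_mul]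
  exact Summable.tsum_add (maj_summable hc h1) (maj_summable he h1)

lemma theta_GG {c e : ℕ → ℝ} (hc : Maj c) (he : Maj e) {q : ℝ} (hq0 : 0 < q)
    (hq : q < 1 / 3125) :
    theta (GG c e) q = GG (Tc c) (fun d => c d + Tc e d) q := by
  have hlog : HasDerivAt Real.log q⁻¹ q := Real.hasDerivAt_log (ne_of_gt hq0)
  have h1 := hasDerivAt_FF' hc hq0 hq
  have h2 := hasDerivAt_FF' he hq0 hq
  have hG : HasDerivAt (GG c e)
      ((FF (Tc c) q / q) * Real.log q + FF c q * q⁻¹ + FF (Tc e) q / q) q :=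
    (h1.mul hlog).add h2
  rw [theta, hG.deriv, GG]
  rw [FF_add hc he.T hq0 hq]
  field_simp
  ring

lemma theta_congr {f g : ℝ → ℝ} (h : ∀ x ∈ Set.Ioo (0:ℝ) (1/3125), f x = g x) {q : ℝ}
    (hq : q ∈ Set.Ioo (0:ℝ) (1/3125)) : theta f q = theta g q := by
  have hev : f =ᶠ[nhds q] g :=
    Filter.eventuallyEq_of_mem (isOpen_Ioo.mem_nhds hq) h
  rw [theta, theta, hev.deriv_eq]

lemma A_congr (k : ℝ) {f g : ℝ → ℝ} (h : ∀ x ∈ Set.Ioo (0:ℝ) (1/3125), f x = g x) {q : ℝ}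
    (hq : q ∈ Set.Ioo (0:ℝ) (1/3125)) : A k f q = A k g q := by
  rw [A, A, theta_congr h hq, h q hq]

lemma FF_comb (α β : ℝ) {c e : ℕ → ℝ} (hc : Maj c) (he : Maj e) {q : ℝ}
    (h1 : |q| < 1 / 3125) :
    FF (fun d => α * c d + β * e d) q = α * FF c q + β * FF e q := by
  rw [FF, FF, FF, ← tsum_mul_left, ← tsum_mul_left,
    ← Summable.tsum_add ((maj_summable hc h1).mul_left α) ((maj_summable he h1).mul_left β)]
  exact tsum_congr fun d => by ring

lemma A_GG (k : ℝ) {c e : ℕ → ℝ} (hc : Maj c) (he : Maj e) {q : ℝ} (hq0 : 0 < q)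
    (hq : q < 1 / 3125) :
    A k (GG c e) q
      = GG (fun d => 5 * Tc c d + k * c d) (fun d => 5 * (c d + Tc e d) + k * e d) q := by
  have h1 : |q| < 1/3125 := by rw [abs_of_pos hq0]; exact hq
  rw [A, theta_GG hc he hq0 hq]
  simp only [GG]
  rw [FF_comb 5 k hc.T hc h1, FF_comb 5 k (hc.add he.T) he h1, FF_add hc he.T hq0 hq]
  ring

lemma FF_shift {cc c' : ℕ → ℝ} (hcc : Maj cc) (hc' : Maj c') {q : ℝ}
    (h1 : |q| < 1 / 3125) (h0 : cc 0 = 0) (hrec : ∀ d, cc (d+1) = 5 * c' d) :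
    FF cc q = 5 * q * FF c' q := by
  rw [FF, Summable.tsum_eq_zero_add (maj_summable hcc h1), h0]
  simp only [hrec, pow_zero, zero_mul, zero_add]
  rw [FF, ← tsum_mul_left]
  exact tsum_congr fun d => by ring

/-! ### Coefficient recursions -/

lemma a_rec (d : ℕ) : ((d:ℝ)+1)^4 * a (d+1)
    = 5 * ((5*(d:ℝ)+1) * ((5*d+2) * ((5*d+3) * (5*d+4)))) * a d := by
  have h5 : 5 * (d+1) = 5*d+1+1+1+1+1 := by ring
  unfold a
  rw [h5]
  simp only [Nat.factorial_succ]
  have h1 : ((Nat.factorial d : ℝ)) ≠ 0 := by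
    exact_mod_cast (Nat.factorial_pos d).ne'
  have h2 : ((d:ℝ) + 1) ≠ 0 := by positivity
  push_cast
  field_simp
  ring

lemma hS5 (d : ℕ) : (∑ m ∈ Finset.Icc 1 (5 * (d+1)), 5 / (m : ℝ))
    = (∑ m ∈ Finset.Icc 1 (5 * d), 5 / (m : ℝ))
      + 5/(5*(d:ℝ)+1) + 5/(5*(d:ℝ)+2) + 5/(5*(d:ℝ)+3) + 5/(5*(d:ℝ)+4) + 5/(5*(d:ℝ)+5) := by
  have e : 5 * (d+1) = (5*d+4)+1 := by ring
  rw [e, Finset.sum_Icc_succ_top (by omega),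
    show 5*d+4 = (5*d+3)+1 from by ring, Finset.sum_Icc_succ_top (by omega),
    show 5*d+3 = (5*d+2)+1 from by ring, Finset.sum_Icc_succ_top (by omega),
    show 5*d+2 = (5*d+1)+1 from by ring, Finset.sum_Icc_succ_top (by omega),
    show 5*d+1 = (5*d)+1 from rfl, Finset.sum_Icc_succ_top (by omega)]
  push_cast
  ring

lemma hS1 (d : ℕ) : (∑ m ∈ Finset.Icc 1 (d+1), 1 / (m : ℝ))
    = (∑ m ∈ Finset.Icc 1 d, 1 / (m : ℝ)) + 1/((d:ℝ)+1) := by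
  rw [Finset.sum_Icc_succ_top (by omega)]
  push_cast
  ring

lemma b_rec (d : ℕ) :
    4*((d:ℝ)+1)^3 * a (d+1) + ((d:ℝ)+1)^4 * b (d+1)
      = 5 * ((5*(d:ℝ)+1)*((5*d+2)*((5*d+3)*(5*d+4))) * b d
        + 5*((5*(d:ℝ)+2)*((5*d+3)*(5*d+4)) + (5*d+1)*((5*d+3)*(5*d+4))
          + (5*d+1)*((5*d+2)*(5*d+4)) + (5*d+1)*((5*d+2)*(5*d+3))) * a d) := by
  have hd : ((d:ℝ)+1) ≠ 0 := by positivity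
  have ha : a (d+1) = 5 * ((5*(d:ℝ)+1) * ((5*d+2) * ((5*d+3) * (5*d+4)))) * a d / ((d:ℝ)+1)^4 := by
    rw [eq_div_iff (by positivity)]
    linarith [a_rec d]
  rw [b, b, hS5 d, hS1 d, ha]
  set S5 := (∑ m ∈ Finset.Icc 1 (5 * d), 5 / (m : ℝ)) with hS5d
  set S1 := (∑ m ∈ Finset.Icc 1 d, 1 / (m : ℝ)) with hS1d
  set X := a d with hX
  have h1 : (5*(d:ℝ)+1) ≠ 0 := by positivity
  have h2 : (5*(d:ℝ)+2) ≠ 0 := by positivity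
  have h3 : (5*(d:ℝ)+3) ≠ 0 := by positivity
  have h4 : (5*(d:ℝ)+4) ≠ 0 := by positivity
  have h5 : (5*(d:ℝ)+5) ≠ 0 := by positivity
  field_simp
  ring

/-! ### The coefficient sequences appearing in the proof -/

noncomputable def c1 : ℕ → ℝ := Tc a
noncomputable def e1 : ℕ → ℝ := fun d => a d + Tc b d
noncomputable def c2 : ℕ → ℝ := Tc c1
noncomputable def e2 : ℕ → ℝ := fun d => c1 d + Tc e1 d
noncomputable def c3 : ℕ → ℝ := Tc c2
noncomputable def e3 : ℕ → ℝ := fun d => c2 d + Tc e2 d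
noncomputable def c4 : ℕ → ℝ := Tc c3
noncomputable def e4 : ℕ → ℝ := fun d => c3 d + Tc e3 d

noncomputable def p4 : ℕ → ℝ := fun d => 5 * Tc a d + 4 * a d
noncomputable def q4 : ℕ → ℝ := fun d => 5 * (a d + Tc b d) + 4 * b d
noncomputable def p3 : ℕ → ℝ := fun d => 5 * Tc p4 d + 3 * p4 d
noncomputable def q3 : ℕ → ℝ := fun d => 5 * (p4 d + Tc q4 d) + 3 * q4 d
noncomputable def p2 : ℕ → ℝ := fun d => 5 * Tc p3 d + 2 * p3 d
noncomputable def q2 : ℕ → ℝ := fun d => 5 * (p3 d + Tc q3 d) + 2 * q3 d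
noncomputable def p1 : ℕ → ℝ := fun d => 5 * Tc p2 d + 1 * p2 d
noncomputable def q1 : ℕ → ℝ := fun d => 5 * (p2 d + Tc q2 d) + 1 * q2 d

lemma maj_c1 : Maj c1 := maj_a.T
lemma maj_e1 : Maj e1 := maj_a.add maj_b.T
lemma maj_c2 : Maj c2 := maj_c1.T
lemma maj_e2 : Maj e2 := maj_c1.add maj_e1.T
lemma maj_c3 : Maj c3 := maj_c2.T
lemma maj_e3 : Maj e3 := maj_c2.add maj_e2.T
lemma maj_c4 : Maj c4 := maj_c3.T
lemma maj_e4 : Maj e4 := maj_c3.add maj_e3.T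

lemma maj_p4 : Maj p4 := (maj_a.T.smul 5).add (maj_a.smul 4)
lemma maj_q4 : Maj q4 := ((maj_a.add maj_b.T).smul 5).add (maj_b.smul 4)
lemma maj_p3 : Maj p3 := (maj_p4.T.smul 5).add (maj_p4.smul 3)
lemma maj_q3 : Maj q3 := ((maj_p4.add maj_q4.T).smul 5).add (maj_q4.smul 3)
lemma maj_p2 : Maj p2 := (maj_p3.T.smul 5).add (maj_p3.smul 2)
lemma maj_q2 : Maj q2 := ((maj_p3.add maj_q3.T).smul 5).add (maj_q3.smul 2)
lemma maj_p1 : Maj p1 := (maj_p2.T.smul 5).add (maj_p2.smul 1)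
lemma maj_q1 : Maj q1 := ((maj_p2.add maj_q2.T).smul 5).add (maj_q2.smul 1)

lemma c4_zero : c4 0 = 0 := by simp [c4, c3, c2, c1, Tc]
lemma e4_zero : e4 0 = 0 := by simp [e4, e3, e2, e1, c3, c2, c1, Tc]

lemma c4_rec (d : ℕ) : c4 (d+1) = 5 * p1 d := by
  simp only [c4, c3, c2, c1, p1, p2, p3, p4, Tc]
  push_cast
  linear_combination a_rec d

lemma e4_rec (d : ℕ) : e4 (d+1) = 5 * q1 d := by
  simp only [e4, e3, e2, e1, c3, c2, c1, p1, p2, p3, p4, q1, q2, q3, q4, Tc]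
  push_cast
  linear_combination b_rec d

/-- Both series converge on `(0, 5⁻⁵)` and `I₁` satisfies the quintic Picard–Fuchs equation
`θ⁴ I₁ = 5q(5θ+1)(5θ+2)(5θ+3)(5θ+4) I₁` there. -/
theorem I1_satisfies_quintic_picard_fuchs :
    (∀ q : ℝ, 0 < q → q < (5 : ℝ) ^ (-5 : ℤ) →
      Summable (fun d : ℕ => a d * q ^ d) ∧ Summable (fun d : ℕ => b d * q ^ d)) ∧
    ∀ q ∈ Set.Ioo (0 : ℝ) ((5 : ℝ) ^ (-5 : ℤ)),
      theta (theta (theta (theta I1))) q = 5 * q * A 1 (A 2 (A 3 (A 4 I1))) q := by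
  have hI : I1 = GG a b := rfl
  constructor
  · intro q hq0 hqr
    rw [r_eq] at hqr
    have h1 : |q| < 1/3125 := by rw [abs_of_pos hq0]; exact hqr
    exact ⟨maj_summable maj_a h1, maj_summable maj_b h1⟩
  · intro q hq
    rw [r_eq] at hq
    obtain ⟨hq0, hqr⟩ := hq
    have hqI : q ∈ Set.Ioo (0:ℝ) (1/3125) := ⟨hq0, hqr⟩
    have habs : |q| < 1/3125 := by rw [abs_of_pos hq0]; exact hqr
    -- the LHS chain
    have h1 : ∀ x ∈ Set.Ioo (0:ℝ) (1/3125), theta I1 x = GG c1 e1 x := by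
      intro x hx
      rw [hI]
      exact theta_GG maj_a maj_b hx.1 hx.2
    have h2 : ∀ x ∈ Set.Ioo (0:ℝ) (1/3125), theta (theta I1) x = GG c2 e2 x := by
      intro x hx
      exact (theta_congr h1 hx).trans (theta_GG maj_c1 maj_e1 hx.1 hx.2)
    have h3 : ∀ x ∈ Set.Ioo (0:ℝ) (1/3125), theta (theta (theta I1)) x = GG c3 e3 x := by
      intro x hx
      exact (theta_congr h2 hx).trans (theta_GG maj_c2 maj_e2 hx.1 hx.2)
    have h4 : theta (theta (theta (theta I1))) q = GG c4 e4 q :=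
      (theta_congr h3 hqI).trans (theta_GG maj_c3 maj_e3 hq0 hqr)
    -- the RHS chain
    have g4 : ∀ x ∈ Set.Ioo (0:ℝ) (1/3125), A 4 I1 x = GG p4 q4 x := by
      intro x hx
      rw [hI]
      exact A_GG 4 maj_a maj_b hx.1 hx.2
    have g3 : ∀ x ∈ Set.Ioo (0:ℝ) (1/3125), A 3 (A 4 I1) x = GG p3 q3 x := by
      intro x hx
      exact (A_congr 3 g4 hx).trans (A_GG 3 maj_p4 maj_q4 hx.1 hx.2)
    have g2 : ∀ x ∈ Set.Ioo (0:ℝ) (1/3125), A 2 (A 3 (A 4 I1)) x = GG p2 q2 x := by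
      intro x hx
      exact (A_congr 2 g3 hx).trans (A_GG 2 maj_p3 maj_q3 hx.1 hx.2)
    have g1 : A 1 (A 2 (A 3 (A 4 I1))) q = GG p1 q1 q :=
      (A_congr 1 g2 hqI).trans (A_GG 1 maj_p2 maj_q2 hq0 hqr)
    rw [h4, g1]
    have hcs : FF c4 q = 5 * q * FF p1 q :=
      FF_shift maj_c4 maj_p1 habs c4_zero c4_rec
    have hes : FF e4 q = 5 * q * FF q1 q :=
      FF_shift maj_e4 maj_q1 habs e4_zero e4_rec
    rw [GG, GG, hcs, hes]
    ring
end

section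
/- For each k ∈ {0,1,2,3}, the formal power series J_k(t) = ∑_{m≥0} c_{k,m} t^{5m+k+1} ∈ ℚ[[t]], where c_{k,m} = (1/(5m+k)!)·∏_{j=0}^{m−1} ((k+1)/5 + j)⁵, satisfies the Landau–Ginzburg Picard–Fuchs equation t⁵·θ₋⁴ J_k = 5⁵·(θ₋−1)(θ₋−2)(θ₋−3)(θ₋−4) J_k, where θ₋ = t·d/dt. -/
/-- The logarithmic derivative operator `θ₋ = t·d/dt` on formal power series over `ℚ`:
`(θ₋ f)ₙ = n · fₙ`. -/
noncomputable def thetaMinus (f : PowerSeries ℚ) : PowerSeries ℚ :=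
  PowerSeries.mk fun n => (n : ℚ) * PowerSeries.coeff n f

/-- The coefficients `c_{k,m} = (1/(5m+k)!) · ∏_{j=0}^{m−1} ((k+1)/5 + j)⁵`. -/
noncomputable def c (k m : ℕ) : ℚ :=
  (1 / (Nat.factorial (5 * m + k) : ℚ)) *
    (∏ j ∈ Finset.range m, (((k : ℚ) + 1) / 5 + (j : ℚ))) ^ 5

/-- The Landau–Ginzburg I-function component
`J_k(t) = ∑_{m ≥ 0} c_{k,m} t^{5m+k+1}` (for `k ≤ 3`, the exponents `5m+k+1` are exactly
the `n` with `n % 5 = k + 1`, and then `m = n / 5`). -/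
noncomputable def J (k : ℕ) : PowerSeries ℚ :=
  PowerSeries.mk fun n => if n % 5 = k + 1 then c k (n / 5) else 0

/-- The operator `θ₋ − a`. -/
noncomputable def B (a : ℚ) (f : PowerSeries ℚ) : PowerSeries ℚ := thetaMinus f - a • f

lemma coeff_theta (n : ℕ) (f : PowerSeries ℚ) :
    PowerSeries.coeff n (thetaMinus f) = (n : ℚ) * PowerSeries.coeff n f := by
  simp [thetaMinus]

lemma coeff_B (a : ℚ) (n : ℕ) (f : PowerSeries ℚ) :
    PowerSeries.coeff n (B a f) = ((n : ℚ) - a) * PowerSeries.coeff n f := by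
  simp [B, coeff_theta]; ring

/-- The key recurrence for the coefficients `c k m`. -/
lemma key (k m : ℕ) :
    ((5*m+k+1:ℚ))^4 * c k m =
      3125 * ((5*m+k+5:ℚ)) * ((5*m+k+4:ℚ)) * ((5*m+k+3:ℚ)) * ((5*m+k+2:ℚ)) * c k (m+1) := by
  have hfac : (Nat.factorial (5 * (m+1) + k) : ℚ) =
      ((5*m+k+5:ℚ)) * ((5*m+k+4:ℚ)) * ((5*m+k+3:ℚ)) * ((5*m+k+2:ℚ)) * ((5*m+k+1:ℚ)) *
        (Nat.factorial (5*m+k) : ℚ) := by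
    have : 5 * (m+1) + k = (5*m+k) + 5 := by ring
    rw [this]
    simp [Nat.factorial]
    ring
  have hne : (Nat.factorial (5*m+k) : ℚ) ≠ 0 := Nat.cast_ne_zero.mpr (Nat.factorial_ne_zero _)
  have h1 : (5*m+k+1:ℚ) ≠ 0 := by positivity
  have h2 : (5*m+k+2:ℚ) ≠ 0 := by positivity
  have h3 : (5*m+k+3:ℚ) ≠ 0 := by positivity
  have h4 : (5*m+k+4:ℚ) ≠ 0 := by positivity
  have h5 : (5*m+k+5:ℚ) ≠ 0 := by positivity
  rw [c, c, hfac, Finset.prod_range_succ]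
  have hlast : ((k:ℚ)+1)/5 + (m:ℚ) = (5*m+k+1)/5 := by ring
  rw [hlast]
  field_simp
  ring

/-- For `k ∈ {0,1,2,3}`, `J_k` satisfies the Landau–Ginzburg Picard–Fuchs equation
`t⁵·θ₋⁴ J_k = 5⁵·(θ₋−1)(θ₋−2)(θ₋−3)(θ₋−4) J_k`. -/
theorem Jk_satisfies_LG_picard_fuchs (k : ℕ) (hk : k ≤ 3) :
    PowerSeries.X ^ 5 * thetaMinus (thetaMinus (thetaMinus (thetaMinus (J k)))) =
      (5 : PowerSeries ℚ) ^ 5 * B 1 (B 2 (B 3 (B 4 (J k)))) := by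
  have h5 : (5 : PowerSeries ℚ) = PowerSeries.C 5 := (map_ofNat (PowerSeries.C) 5).symm
  ext n
  rw [mul_comm (PowerSeries.X ^ 5), PowerSeries.coeff_mul_X_pow', h5, ← map_pow,
    PowerSeries.coeff_C_mul, coeff_B, coeff_B, coeff_B, coeff_B,
    coeff_theta, coeff_theta, coeff_theta, coeff_theta]
  have hJ : ∀ d : ℕ, PowerSeries.coeff d (J k) = if d % 5 = k + 1 then c k (d / 5) else 0 := by
    intro d; simp [J]
  by_cases hn : 5 ≤ n
  · rw [if_pos hn, hJ, hJ]
    have hmod : (n - 5) % 5 = n % 5 := by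
      conv_rhs => rw [← Nat.sub_add_cancel hn]
      rw [Nat.add_mod_right]
    by_cases hm : n % 5 = k + 1
    · rw [if_pos hm, if_pos (hmod.trans hm)]
      set d := n - 5 with hd
      set m := d / 5 with hm5
      have hdm : d = 5 * m + (k + 1) := by
        conv_lhs => rw [← Nat.div_add_mod d 5, hmod, hm]
      have hn5 : n = 5 * (m + 1) + (k + 1) := by omega
      have hnd : n / 5 = m + 1 := by omega
      rw [hnd]
      have hdq : (d : ℚ) = 5*m+k+1 := by rw [hdm]; push_cast; ring
      have hnq : (n : ℚ) = 5*m+k+6 := by rw [hn5]; push_cast; ring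
      rw [hdq, hnq]
      have := key k m
      norm_num
      linear_combination this
    · rw [if_neg hm, if_neg fun h => hm (hmod.symm.trans h)]
      ring
  · rw [if_neg hn, hJ]
    by_cases hm : n % 5 = k + 1
    · rw [if_pos hm]
      have : n = k + 1 := by omega
      subst this
      interval_cases k <;> norm_num
    · rw [if_neg hm]; ring
end

section
/- For every complex number σ with σ ∉ ℤ, the following identity of complex numbers holds: (π²/2)·(Γ(σ+1/2)·Γ(1−5σ)·Γ(1/2−σ)/Γ(1−σ)⁵)·e^{iπ(−σ−1/2)} = −(1/(64π³))·Γ(σ)⁵·Γ(1−5σ)·Γ(σ+1/2)·Γ(1/2−σ)·e^{4πiσ}·(1−e^{−2πiσ})⁵, where Γ is the complex Gamma function. -/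
/-- The reflection-formula rewriting of the integrand of Walcher's Mellin–Barnes
representation of the quintic disk potential as the hemisphere partition function
integrand of the extended quintic GLSM: for `σ ∉ ℤ`,
`(π²/2)·(Γ(σ+1/2)Γ(1−5σ)Γ(1/2−σ)/Γ(1−σ)⁵)·e^{iπ(−σ−1/2)}
  = −(1/(64π³))·Γ(σ)⁵Γ(1−5σ)Γ(σ+1/2)Γ(1/2−σ)·e^{4πiσ}(1−e^{−2πiσ})⁵`. -/
theorem mellin_barnes_integrand_identity (σ : ℂ) (hσ : ∀ n : ℤ, σ ≠ (n : ℂ)) :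
    ((Real.pi : ℂ) ^ 2 / 2) *
        (Complex.Gamma (σ + 1 / 2) * Complex.Gamma (1 - 5 * σ) * Complex.Gamma (1 / 2 - σ) /
          Complex.Gamma (1 - σ) ^ 5) *
        Complex.exp (Complex.I * (Real.pi : ℂ) * (-σ - 1 / 2)) =
      -(1 / (64 * (Real.pi : ℂ) ^ 3)) *
        (Complex.Gamma σ ^ 5 * Complex.Gamma (1 - 5 * σ) * Complex.Gamma (σ + 1 / 2) *
          Complex.Gamma (1 / 2 - σ) * Complex.exp (4 * (Real.pi : ℂ) * Complex.I * σ) *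
          (1 - Complex.exp (-2 * (Real.pi : ℂ) * Complex.I * σ)) ^ 5) := by
  have hπ : (Real.pi : ℂ) ≠ 0 := by exact_mod_cast Real.pi_ne_zero
  have hs : Complex.sin ((Real.pi : ℂ) * σ) ≠ 0 := by
    rw [Complex.sin_ne_zero_iff]
    intro k h
    apply hσ k
    rw [mul_comm (k : ℂ) _] at h
    exact mul_left_cancel₀ hπ h
  have hΓσ : Complex.Gamma σ ≠ 0 := by
    apply Complex.Gamma_ne_zero
    intro m
    simpa using hσ (-m)
  have hrefl := Complex.Gamma_mul_Gamma_one_sub σ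
  have hΓ1 : Complex.Gamma (1 - σ) =
      (Real.pi : ℂ) / (Complex.sin ((Real.pi : ℂ) * σ) * Complex.Gamma σ) := by
    field_simp at hrefl ⊢
    linear_combination hrefl
  have ht : Complex.exp ((Real.pi : ℂ) * σ * Complex.I) ≠ 0 := Complex.exp_ne_zero _
  have hmi : Complex.exp ((-((Real.pi : ℂ) / 2)) * Complex.I) = -Complex.I := by
    rw [Complex.exp_mul_I, Complex.cos_neg, Complex.sin_neg, Complex.cos_pi_div_two,
      Complex.sin_pi_div_two]
    ring
  have hE1 : Complex.exp (Complex.I * (Real.pi : ℂ) * (-σ - 1 / 2)) =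
      -Complex.I * (Complex.exp ((Real.pi : ℂ) * σ * Complex.I))⁻¹ := by
    rw [show Complex.I * (Real.pi : ℂ) * (-σ - 1 / 2)
        = -((Real.pi : ℂ) * σ * Complex.I) + (-((Real.pi : ℂ) / 2)) * Complex.I by ring,
      Complex.exp_add, hmi, Complex.exp_neg]
    ring
  have hE2 : Complex.exp (4 * (Real.pi : ℂ) * Complex.I * σ)
      = Complex.exp ((Real.pi : ℂ) * σ * Complex.I) ^ 4 := by
    rw [← Complex.exp_nat_mul]
    norm_num
    ring_nf
  have hE3 : Complex.exp (-2 * (Real.pi : ℂ) * Complex.I * σ)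
      = ((Complex.exp ((Real.pi : ℂ) * σ * Complex.I))⁻¹) ^ 2 := by
    rw [← Complex.exp_neg, ← Complex.exp_nat_mul]
    norm_num
    ring_nf
  have hsin : Complex.sin ((Real.pi : ℂ) * σ) =
      ((Complex.exp ((Real.pi : ℂ) * σ * Complex.I))⁻¹
        - Complex.exp ((Real.pi : ℂ) * σ * Complex.I)) * Complex.I / 2 := by
    rw [Complex.sin, ← Complex.exp_neg]
    ring_nf
  rw [hΓ1, hE1, hE2, hE3]
  rw [hsin] at hs ⊢
  set t := Complex.exp ((Real.pi : ℂ) * σ * Complex.I) with htdef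
  field_simp
  have hI6 : Complex.I ^ 6 = -1 := by simp [pow_succ]
  ring_nf
  simp only [hI6]
  ring
end

section
/- For every natural number m, (−1)^m·Γ(−5m−3/2)·Γ(m+1/2)⁵ = 4π³·((2m+1)!!)⁵/((2m+1)⁵·(10m+3)!!), where Γ is the real Gamma function. -/
open Real

lemma gamma_nat_add_half_aux (m : ℕ) :
    Real.Gamma ((m : ℝ) + 1 / 2) * 2 ^ m =
      Real.sqrt π * ((2 * m - 1 : ℕ).doubleFactorial : ℝ) := by
  induction m with
  | zero =>
    norm_num
    exact Real.Gamma_one_half_eq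
  | succ n ih =>
    have h1 : ((n : ℝ) + 1) + 1 / 2 = ((n : ℝ) + 1 / 2) + 1 := by ring
    have h2 : (2 * (n + 1) - 1 : ℕ) = 2 * n + 1 := by omega
    have h3 : (2 * n + 1).doubleFactorial = (2 * n + 1) * (2 * n - 1).doubleFactorial := by
      simpa using Nat.doubleFactorial_add_one (2 * n)
    rw [Nat.cast_add, Nat.cast_one, h1, Real.Gamma_add_one (by positivity), h2, h3]
    push_cast
    linear_combination (2 * (n : ℝ) + 1) * ih

lemma gamma_half_sub_nat_aux (n : ℕ) :
    Real.Gamma (1 / 2 - (n : ℝ)) * ((2 * n - 1 : ℕ).doubleFactorial : ℝ) =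
      (-2 : ℝ) ^ n * Real.sqrt π := by
  induction n with
  | zero =>
    norm_num
    exact Real.Gamma_one_half_eq
  | succ k ih =>
    have hk : (1 : ℝ) / 2 - ((k : ℝ) + 1) = (-(1 / 2) - k : ℝ) := by ring
    have hg : Real.Gamma (1 / 2 - (k : ℝ)) = (-(1 / 2) - (k : ℝ)) * Real.Gamma (-(1 / 2) - k) := by
      have := Real.Gamma_add_one (s := -(1 / 2) - (k : ℝ)) (by
        intro h
        have : (k : ℝ) ≥ 0 := Nat.cast_nonneg k
        nlinarith)
      rw [← this]; ring_nf
    have h2 : (2 * (k + 1) - 1 : ℕ) = 2 * k + 1 := by omega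
    have h3 : (2 * k + 1).doubleFactorial = (2 * k + 1) * (2 * k - 1).doubleFactorial := by
      simpa using Nat.doubleFactorial_add_one (2 * k)
    rw [hg] at ih
    rw [Nat.cast_add, Nat.cast_one, hk, h2, h3]
    push_cast at ih ⊢
    linear_combination (-2 : ℝ) * ih

/-- The coefficient identity for the Coulomb-branch expansion of the extended-GLSM mirror
period in the Landau–Ginzburg phase:
`(−1)^m·Γ(−5m−3/2)·Γ(m+1/2)⁵ = 4π³·((2m+1)!!)⁵/((2m+1)⁵·(10m+3)!!)`. -/
theorem gamma_coefficient_LG_phase (m : ℕ) :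
    (-1 : ℝ) ^ m * Real.Gamma (-5 * m - 3 / 2) * Real.Gamma ((m : ℝ) + 1 / 2) ^ 5 =
      4 * Real.pi ^ 3 *
        ((Nat.doubleFactorial (2 * m + 1) : ℝ) ^ 5 /
          (((2 * m + 1 : ℕ) : ℝ) ^ 5 * (Nat.doubleFactorial (10 * m + 3) : ℝ))) := by
  have h1 := gamma_nat_add_half_aux m
  have h2 := gamma_half_sub_nat_aux (5 * m + 2)
  have harg : (1 : ℝ) / 2 - ((5 * m + 2 : ℕ) : ℝ) = -5 * m - 3 / 2 := by push_cast; ring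
  have hidx : (2 * (5 * m + 2) - 1 : ℕ) = 10 * m + 3 := by omega
  rw [harg, hidx] at h2
  set s := Real.sqrt π with hs
  set A : ℝ := ((2 * m - 1 : ℕ).doubleFactorial : ℝ) with hA
  set B : ℝ := ((10 * m + 3).doubleFactorial : ℝ) with hB
  have hApos : (0 : ℝ) < A := by
    rw [hA]; exact_mod_cast Nat.doubleFactorial_pos (2 * m - 1)
  have hBpos : (0 : ℝ) < B := by
    rw [hB]; exact_mod_cast Nat.doubleFactorial_pos (10 * m + 3)
  have h2m : (0 : ℝ) < (2 : ℝ) ^ m := by positivity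
  have hodd : ((2 * m + 1 : ℕ) : ℝ) ≠ 0 := by positivity
  have hdf : ((2 * m + 1).doubleFactorial : ℝ) = ((2 * m + 1 : ℕ) : ℝ) * A := by
    rw [hA]
    exact_mod_cast congrArg (Nat.cast (R := ℝ)) (by simpa using Nat.doubleFactorial_add_one (2 * m))
  have hGpos : Real.Gamma ((m : ℝ) + 1 / 2) = s * A / 2 ^ m := by
    rw [eq_div_iff (ne_of_gt h2m)]; exact h1
  have hGneg : Real.Gamma (-5 * (m : ℝ) - 3 / 2) = (-2 : ℝ) ^ (5 * m + 2) * s / B := by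
    rw [eq_div_iff (ne_of_gt hBpos)]; exact h2
  have hneg : (-2 : ℝ) ^ (5 * m + 2) = (-1 : ℝ) ^ m * (4 * ((2 : ℝ) ^ m) ^ 5) := by
    rw [show (-2 : ℝ) = -1 * 2 by norm_num, mul_pow]
    have e1 : (-1 : ℝ) ^ (5 * m + 2) = (-1 : ℝ) ^ m := by
      rcases Nat.even_or_odd m with h | h
      · have h5 : Even (5 * m + 2) := by
          rw [Nat.even_iff] at h ⊢; omega
        rw [h5.neg_one_pow, h.neg_one_pow]
      · have h5 : Odd (5 * m + 2) := by
          rw [Nat.odd_iff] at h ⊢; omega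
        rw [h5.neg_one_pow, h.neg_one_pow]
    have e2 : (2 : ℝ) ^ (5 * m + 2) = 4 * ((2 : ℝ) ^ m) ^ 5 := by
      rw [pow_add, mul_comm 5 m, pow_mul]; ring
    rw [e1, e2]
  have hm2 : (-1 : ℝ) ^ m * (-1 : ℝ) ^ m = 1 := by
    rw [← pow_add]; exact (Even.add_self m).neg_one_pow
  have hs6 : s ^ 6 = π ^ 3 := by
    rw [show (6 : ℕ) = 2 * 3 by norm_num, pow_mul, hs, Real.sq_sqrt Real.pi_pos.le]
  rw [hGpos, hGneg, hneg, hdf]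
  rw [mul_pow]
  have key : ((2 * m + 1 : ℕ) : ℝ) ^ 5 * A ^ 5 / (((2 * m + 1 : ℕ) : ℝ) ^ 5 * B) = A ^ 5 / B := by
    rw [mul_div_mul_left _ _ (pow_ne_zero 5 hodd)]
  rw [key]
  field_simp
  linear_combination (s^6) * hm2 + hs6
end

section
/- The radius of convergence of the complex power series ∑_{m≥0} c_m·t^{5m+1}, where c_m = (1/(5m)!)·∏_{j=0}^{m−1}(1/5+j)⁵, is exactly 5. -/
open Filter Topology Finset

private noncomputable def I0LG_b (m : ℕ) : ℝ :=
  (1 / (Nat.factorial (5 * m) : ℝ)) * (∏ j ∈ Finset.range m, ((1 : ℝ) / 5 + (j : ℝ))) ^ 5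

private lemma I0LG_b_pos (m : ℕ) : 0 < I0LG_b m := by
  unfold I0LG_b
  have h : 0 < ∏ j ∈ Finset.range m, ((1 : ℝ) / 5 + (j : ℝ)) :=
    Finset.prod_pos (fun j _ => by positivity)
  positivity

private lemma I0LG_norm (t : ℂ) (m : ℕ) :
    ‖(1 / (Nat.factorial (5 * m) : ℂ)) *
        (∏ j ∈ Finset.range m, ((1 : ℂ) / 5 + (j : ℂ))) ^ 5 * t ^ (5 * m + 1)‖
      = I0LG_b m * ‖t‖ ^ (5 * m + 1) := by
  have hc : (1 / (Nat.factorial (5 * m) : ℂ)) *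
        (∏ j ∈ Finset.range m, ((1 : ℂ) / 5 + (j : ℂ))) ^ 5 = ((I0LG_b m : ℝ) : ℂ) := by
    unfold I0LG_b; push_cast; ring
  rw [hc, norm_mul, norm_pow, Complex.norm_real, Real.norm_of_nonneg (I0LG_b_pos m).le]

private lemma I0LG_aux_tendsto (k : ℝ) (hk : 0 < k) :
    Tendsto (fun m : ℕ => ((m : ℝ) + 1/5) / (5 * m + k)) atTop (𝓝 (1/5)) := by
  have h0 : Tendsto (fun m : ℕ => (1 : ℝ) / m) atTop (𝓝 0) :=
    tendsto_one_div_atTop_nhds_zero_nat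
  have hnum : Tendsto (fun m : ℕ => (1 : ℝ) + (1/5) * (1/m)) atTop (𝓝 1) := by
    have := (h0.const_mul (1/5)).const_add (1:ℝ)
    simpa using this
  have hden : Tendsto (fun m : ℕ => (5 : ℝ) + k * (1/m)) atTop (𝓝 5) := by
    have := (h0.const_mul k).const_add (5:ℝ)
    simpa using this
  have h : Tendsto (fun m : ℕ => ((1 : ℝ) + (1/5) * (1/m)) / (5 + k * (1/m))) atTop
      (𝓝 (1/5)) := by
    have := hnum.div hden (by norm_num)
    exact this
  refine h.congr' ?_
  filter_upwards [eventually_gt_atTop 0] with m hm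
  have hm' : (m : ℝ) ≠ 0 := Nat.cast_ne_zero.mpr hm.ne'
  have hd : (5 * (m:ℝ) + k) ≠ 0 := by positivity
  field_simp

private lemma I0LG_ratio_tendsto (t : ℂ) (ht : t ≠ 0) :
    Tendsto (fun m : ℕ =>
        ‖(1 / (Nat.factorial (5 * (m+1)) : ℂ)) *
            (∏ j ∈ Finset.range (m+1), ((1 : ℂ) / 5 + (j : ℂ))) ^ 5 * t ^ (5 * (m+1) + 1)‖
          / ‖(1 / (Nat.factorial (5 * m) : ℂ)) *
            (∏ j ∈ Finset.range m, ((1 : ℂ) / 5 + (j : ℂ))) ^ 5 * t ^ (5 * m + 1)‖)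
      atTop (𝓝 ((‖t‖ / 5) ^ 5)) := by
  have htpos : (0:ℝ) < ‖t‖ := norm_pos_iff.mpr ht
  have key : ∀ m : ℕ,
      ‖(1 / (Nat.factorial (5 * (m+1)) : ℂ)) *
            (∏ j ∈ Finset.range (m+1), ((1 : ℂ) / 5 + (j : ℂ))) ^ 5 * t ^ (5 * (m+1) + 1)‖
          / ‖(1 / (Nat.factorial (5 * m) : ℂ)) *
            (∏ j ∈ Finset.range m, ((1 : ℂ) / 5 + (j : ℂ))) ^ 5 * t ^ (5 * m + 1)‖
        = (((m : ℝ) + 1/5) / (5 * m + 1)) * (((m : ℝ) + 1/5) / (5 * m + 2)) *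
          (((m : ℝ) + 1/5) / (5 * m + 3)) * (((m : ℝ) + 1/5) / (5 * m + 4)) *
          (((m : ℝ) + 1/5) / (5 * m + 5)) * ‖t‖ ^ 5 := by
    intro m
    rw [I0LG_norm, I0LG_norm]
    have hfacN : Nat.factorial (5 * (m+1))
        = (5*m+5) * ((5*m+4) * ((5*m+3) * ((5*m+2) * ((5*m+1) * Nat.factorial (5*m))))) := by
      have h : 5 * (m+1) = 5*m+1+1+1+1+1 := by ring
      rw [h]
      simp [Nat.factorial_succ]
    have hfac : ((Nat.factorial (5 * (m+1)) : ℝ))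
        = (5*(m:ℝ)+5) * (5*m+4) * (5*m+3) * (5*m+2) * (5*m+1) * (Nat.factorial (5*m) : ℝ) := by
      rw [hfacN]; push_cast; ring
    have hbm := I0LG_b_pos m
    have hbm1 := I0LG_b_pos (m+1)
    have h1 : (0:ℝ) < 5*(m:ℝ)+1 := by positivity
    have h2 : (0:ℝ) < 5*(m:ℝ)+2 := by positivity
    have h3 : (0:ℝ) < 5*(m:ℝ)+3 := by positivity
    have h4 : (0:ℝ) < 5*(m:ℝ)+4 := by positivity
    have h5 : (0:ℝ) < 5*(m:ℝ)+5 := by positivity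
    have hb : I0LG_b (m+1) * ((5*(m:ℝ)+5) * (5*m+4) * (5*m+3) * (5*m+2) * (5*m+1))
        = I0LG_b m * ((m:ℝ) + 1/5)^5 := by
      unfold I0LG_b
      rw [Finset.prod_range_succ, hfac, mul_pow]
      have hf0 : ((Nat.factorial (5*m) : ℝ)) ≠ 0 := by positivity
      field_simp
      ring
    have hratio : I0LG_b (m+1) / I0LG_b m
        = (((m : ℝ) + 1/5) / (5 * m + 1)) * (((m : ℝ) + 1/5) / (5 * m + 2)) *
          (((m : ℝ) + 1/5) / (5 * m + 3)) * (((m : ℝ) + 1/5) / (5 * m + 4)) *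
          (((m : ℝ) + 1/5) / (5 * m + 5)) := by
      rw [div_eq_iff hbm.ne', div_mul_div_comm, div_mul_div_comm, div_mul_div_comm,
        div_mul_div_comm, div_mul_eq_mul_div, eq_div_iff (by positivity)]
      linear_combination hb
    have hpow : ‖t‖ ^ (5 * (m+1) + 1) = ‖t‖ ^ (5 * m + 1) * ‖t‖ ^ 5 := by
      rw [← pow_add]; ring_nf
    have hX : (‖t‖ : ℝ) ^ (5*m+1) ≠ 0 := by positivity
    have step : (I0LG_b (m+1) * (‖t‖^(5*m+1) * ‖t‖^5)) / (I0LG_b m * ‖t‖^(5*m+1))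
        = (I0LG_b (m+1) / I0LG_b m) * ‖t‖^5 := by
      rw [mul_div_mul_comm, mul_comm (‖t‖^(5*m+1)) (‖t‖^5), mul_div_assoc, div_self hX, mul_one]
    rw [hpow, step, hratio]
  have hlim : Tendsto (fun m : ℕ =>
      (((m : ℝ) + 1/5) / (5 * m + 1)) * (((m : ℝ) + 1/5) / (5 * m + 2)) *
        (((m : ℝ) + 1/5) / (5 * m + 3)) * (((m : ℝ) + 1/5) / (5 * m + 4)) *
        (((m : ℝ) + 1/5) / (5 * m + 5)) * ‖t‖ ^ 5) atTop
      (𝓝 (1/5 * (1/5) * (1/5) * (1/5) * (1/5) * ‖t‖ ^ 5)) :=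
    (((((I0LG_aux_tendsto 1 (by norm_num)).mul (I0LG_aux_tendsto 2 (by norm_num))).mul
      (I0LG_aux_tendsto 3 (by norm_num))).mul (I0LG_aux_tendsto 4 (by norm_num))).mul
      (I0LG_aux_tendsto 5 (by norm_num))).mul tendsto_const_nhds
  have heq : (‖t‖ / 5) ^ 5 = 1/5 * (1/5) * (1/5) * (1/5) * (1/5) * ‖t‖ ^ 5 := by ring
  rw [heq]
  exact hlim.congr (fun m => (key m).symm)

/-- The radius of convergence of `∑_{m ≥ 0} c_m t^{5m+1}` with
`c_m = (1/(5m)!)·∏_{j=0}^{m−1}(1/5+j)⁵` is exactly `5`: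
the series converges for `‖t‖ < 5` and diverges for `‖t‖ > 5`. -/
theorem I0LG_radius_of_convergence :
    (∀ t : ℂ, ‖t‖ < 5 →
      Summable fun m : ℕ =>
        (1 / (Nat.factorial (5 * m) : ℂ)) *
          (∏ j ∈ Finset.range m, ((1 : ℂ) / 5 + (j : ℂ))) ^ 5 * t ^ (5 * m + 1)) ∧
    (∀ t : ℂ, 5 < ‖t‖ →
      ¬ Summable fun m : ℕ =>
        (1 / (Nat.factorial (5 * m) : ℂ)) *
          (∏ j ∈ Finset.range m, ((1 : ℂ) / 5 + (j : ℂ))) ^ 5 * t ^ (5 * m + 1)) := by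
  constructor
  · intro t ht
    rcases eq_or_ne t 0 with rfl | ht0
    · apply summable_of_ne_finset_zero (s := ∅)
      intro m _
      simp
    · apply summable_of_ratio_test_tendsto_lt_one (l := (‖t‖ / 5) ^ 5)
      · have h1 : ‖t‖ / 5 < 1 := (div_lt_one (by norm_num : (0:ℝ) < 5)).mpr ht
        have h0 : 0 ≤ ‖t‖ / 5 := by positivity
        exact pow_lt_one₀ h0 h1 (by norm_num)
      · filter_upwards with m
        have hfac : ((Nat.factorial (5*m) : ℂ)) ≠ 0 :=
          Nat.cast_ne_zero.mpr (Nat.factorial_ne_zero _)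
        have hprod : (∏ j ∈ Finset.range m, ((1 : ℂ) / 5 + (j : ℂ))) ≠ 0 := by
          apply Finset.prod_ne_zero_iff.mpr
          intro j _
          have h : ((1 : ℂ) / 5 + (j : ℂ)) = (((1/5 + j : ℝ)) : ℂ) := by push_cast; ring
          rw [h]
          exact_mod_cast (by positivity : (0:ℝ) < 1/5 + j).ne'
        exact mul_ne_zero (mul_ne_zero (by simpa using hfac) (pow_ne_zero _ hprod))
          (pow_ne_zero _ ht0)
      · exact I0LG_ratio_tendsto t ht0
  · intro t ht
    have ht0 : t ≠ 0 := by
      intro h; rw [h] at ht; simp at ht; linarith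
    apply not_summable_of_ratio_test_tendsto_gt_one (l := (‖t‖ / 5) ^ 5)
    · have h1 : 1 < ‖t‖ / 5 := by
        rw [lt_div_iff₀ (by norm_num : (0:ℝ) < 5)]; linarith
      exact one_lt_pow₀ h1 (by norm_num)
    · exact I0LG_ratio_tendsto t ht0
end
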